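/- Let n = 2b, let Φ be an n×n real matrix, let X(0) ⊆ ℝⁿ and {V(k)}_{k ≥ 0} ⊆ ℝⁿ be nonempty sets, and define X(k+1) = Φ X(k) ⊕ V(k). For each j let X̂_j(0) ⊆ ℝ² satisfy π_j X(0) ⊆ X̂_j(0), and for each i, k let V̂_i(k) ⊆ ℝ² satisfy π_i V(k) ⊆ V̂_i(k). Define, for i = 1, …, b, Ŵ_i(0) = {0} ⊆ ℝ², Ŵ_i(k+1) = (Φ_{i1} Ŵ₁(k) ⊕ ⋯ ⊕ Φ_{ib} Ŵ_b(k)) ⊕ V̂_i(k), and X̂_i(k) = (Φᵏ_{i1} X̂₁(0) ⊕ ⋯ ⊕ Φᵏ_{ib} X̂_b(0)) ⊕ Ŵ_i(k), where Φᵏ_{ij} is the (i,j) 2×2 block of Φᵏ. Then the decomposed recurrence is sound: X(k) ⊆ X̂₁(k) × ⋯ × X̂_b(k) for every k ≥ 0. -/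

import Mathlib

open Set Pointwise Matrix

noncomputable section

/-- The `p`-norm on `ι → ℝ`. -/
def pnorm {ι : Type} [Fintype ι] (p : ℝ) (x : ι → ℝ) : ℝ :=
  (∑ i, |x i| ^ p) ^ (1 / p)

/-- Dot product. -/
def dotp {ι : Type} [Fintype ι] (x y : ι → ℝ) : ℝ := ∑ i, x i * y i

/-- Support function of a set. -/
def suppF {ι : Type} [Fintype ι] (X : Set (ι → ℝ)) (ℓ : ι → ℝ) : ℝ :=
  sSup (dotp ℓ '' X)

/-- Closed unit ball of the `p`-norm. -/
def pball (ι : Type) [Fintype ι] (p : ℝ) : Set (ι → ℝ) := {x | pnorm p x ≤ 1}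

/-- Hausdorff distance with respect to the `p`-norm. -/
def hausP {ι : Type} [Fintype ι] (p : ℝ) (X Y : Set (ι → ℝ)) : ℝ :=
  sInf {ε | 0 ≤ ε ∧ X ⊆ Y + ε • pball ι p ∧ Y ⊆ X + ε • pball ι p}

/-- Image of a set under a matrix. -/
def mapSet {ι κ : Type} [Fintype ι] [Fintype κ] (M : Matrix ι κ ℝ) (S : Set (κ → ℝ)) :
    Set (ι → ℝ) := M.mulVec '' S

/-- Induced matrix `p`-norm. -/
def matP {ι κ : Type} [Fintype ι] [Fintype κ] (p : ℝ) (M : Matrix ι κ ℝ) : ℝ :=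
  sSup {r | ∃ x : κ → ℝ, pnorm p x ≤ 1 ∧ r = pnorm p (M.mulVec x)}

/-- Diameter of a planar set with respect to the dual exponent `q`:
the smallest `Δ ≥ 0` with `ρ_Y(d) + ρ_Y(-d) ≤ ‖d‖_q * Δ` for all `d`. -/
def diamP (q : ℝ) (Y : Set (Fin 2 → ℝ)) : ℝ :=
  sInf {Δ | 0 ≤ Δ ∧ ∀ d : Fin 2 → ℝ, suppF Y d + suppF Y (-d) ≤ pnorm q d * Δ}

/-- The 2×2 block of `Φ` in block-row `i` and block-column `j`. -/
def blk {b : ℕ} (Φ : Matrix (Fin b × Fin 2) (Fin b × Fin 2) ℝ) (i j : Fin b) :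
    Matrix (Fin 2) (Fin 2) ℝ := fun r c => Φ (i, r) (j, c)

/-- The 2×n row-block of `Φ` formed by the rows of block `i`. -/
def rowBlk {b : ℕ} (Φ : Matrix (Fin b × Fin 2) (Fin b × Fin 2) ℝ) (i : Fin b) :
    Matrix (Fin 2) (Fin b × Fin 2) ℝ := fun r c => Φ (i, r) c

/-- Projection `π_i` onto the `i`-th block of coordinates. -/
def projB {b : ℕ} (i : Fin b) (x : Fin b × Fin 2 → ℝ) : Fin 2 → ℝ := fun r => x (i, r)

/-- Cartesian product of a family of planar sets, as a subset of `ℝⁿ` (`n = 2b`). -/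
def prodSet {b : ℕ} (Xh : Fin b → Set (Fin 2 → ℝ)) : Set (Fin b × Fin 2 → ℝ) :=
  {x | ∀ i, projB i x ∈ Xh i}

/-- Cartesian decomposition `D̂(X) = π₁X × ⋯ × π_b X`. -/
def cartD {b : ℕ} (X : Set (Fin b × Fin 2 → ℝ)) : Set (Fin b × Fin 2 → ℝ) :=
  prodSet (fun i => projB i '' X)

/-- Decomposed image: `X̂'_i = ⨁_j Φ_{ij} X̂_j`. -/
def dimg {b : ℕ} (Φ : Matrix (Fin b × Fin 2) (Fin b × Fin 2) ℝ)
    (Xh : Fin b → Set (Fin 2 → ℝ)) : Fin b → Set (Fin 2 → ℝ) :=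
  fun i => ∑ j, mapSet (blk Φ i j) (Xh j)



lemma mem_finset_sum_sets {ι E : Type*} [AddCommMonoid E] (s : Finset ι)
    (S : ι → Set E) (f : ι → E) (hf : ∀ i ∈ s, f i ∈ S i) :
    ∑ i ∈ s, f i ∈ ∑ i ∈ s, S i := by
  classical
  induction s using Finset.induction with
  | empty => simp
  | insert a t hx ih =>
    rw [Finset.sum_insert hx, Finset.sum_insert hx]
    exact Set.add_mem_add (hf a (Finset.mem_insert_self a t))
      (ih fun i hi => hf i (Finset.mem_insert_of_mem hi))

lemma projB_mulVec {b : ℕ} (M : Matrix (Fin b × Fin 2) (Fin b × Fin 2) ℝ)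
    (x : Fin b × Fin 2 → ℝ) (i : Fin b) :
    projB i (M.mulVec x) = ∑ j, (blk M i j).mulVec (projB j x) := by
  funext r
  simp [projB, Matrix.mulVec, dotProduct, blk, Finset.sum_apply,
    Fintype.sum_prod_type]
  fin_cases r <;> simp

lemma projB_add {b : ℕ} (x y : Fin b × Fin 2 → ℝ) (i : Fin b) :
    projB i (x + y) = projB i x + projB i y := rfl

/-- soundness of the decomposed recurrence with time-varying input
sets: `X(k) ⊆ X̂₁(k) × ⋯ × X̂_b(k)` for every `k`, where
`Ŵ_i(k+1) = (⨁_j Φ_{ij} Ŵ_j(k)) ⊕ V̂_i(k)` and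
`X̂_i(k) = (⨁_j Φᵏ_{ij} X̂_j(0)) ⊕ Ŵ_i(k)`. -/
theorem decomposed_recurrence_sound_varying {b : ℕ}
    (Φ : Matrix (Fin b × Fin 2) (Fin b × Fin 2) ℝ)
    (X : ℕ → Set (Fin b × Fin 2 → ℝ)) (V : ℕ → Set (Fin b × Fin 2 → ℝ))
    (hX0ne : (X 0).Nonempty) (hVne : ∀ k, (V k).Nonempty)
    (hX : ∀ k, X (k + 1) = mapSet Φ (X k) + V k)
    (Xh0 : Fin b → Set (Fin 2 → ℝ))
    (hXh0 : ∀ j, projB j '' X 0 ⊆ Xh0 j)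
    (Vh : Fin b → ℕ → Set (Fin 2 → ℝ))
    (hVh : ∀ i k, projB i '' V k ⊆ Vh i k)
    (Wh : Fin b → ℕ → Set (Fin 2 → ℝ))
    (hWh0 : ∀ i, Wh i 0 = {0})
    (hWhs : ∀ i k, Wh i (k + 1) = (∑ j, mapSet (blk Φ i j) (Wh j k)) + Vh i k)
    (Xh : Fin b → ℕ → Set (Fin 2 → ℝ))
    (hXh : ∀ i k, Xh i k = (∑ j, mapSet (blk (Φ ^ k) i j) (Xh0 j)) + Wh i k) :
    ∀ k, X k ⊆ prodSet (fun i => Xh i k) := by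
  have key : ∀ k, ∀ x ∈ X k, ∃ x0 ∈ X 0, ∃ w, x = (Φ ^ k).mulVec x0 + w ∧
      ∀ i, projB i w ∈ Wh i k := by
    intro k
    induction k with
    | zero =>
      intro x hx
      refine ⟨x, hx, 0, by simp [Matrix.mulVec], fun i => ?_⟩
      rw [hWh0]
      simp [projB]
      rfl
    | succ k ih =>
      intro x hx
      rw [hX k] at hx
      obtain ⟨y, hy, v, hv, rfl⟩ := hx
      obtain ⟨z, hz, rfl⟩ := hy
      obtain ⟨x0, hx0, w, rfl, hw⟩ := ih z hz
      refine ⟨x0, hx0, Φ.mulVec w + v, ?_, fun i => ?_⟩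
      · rw [Matrix.mulVec_add, pow_succ', ← Matrix.mulVec_mulVec]
        exact add_assoc _ _ _
      · rw [hWhs, projB_add, projB_mulVec]
        refine Set.add_mem_add ?_ (hVh i k ⟨v, hv, rfl⟩)
        exact mem_finset_sum_sets _ _ _ fun j _ => ⟨projB j w, hw j, rfl⟩
  intro k x hx i
  obtain ⟨x0, hx0, w, rfl, hw⟩ := key k x hx
  show projB i _ ∈ Xh i k
  rw [hXh, projB_add, projB_mulVec]
  refine Set.add_mem_add ?_ (hw i)
  exact mem_finset_sum_sets _ _ _ fun j _ => ⟨projB j x0, hXh0 j ⟨x0, hx0, rfl⟩, rfl⟩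


end
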